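/- Counterexample showing the summability condition is not necessary: let X = {−1, 1}, π the uniform distribution, P₀(x, ·) = π, P₁(x, ·) = δ_{−x}, and Q₀ = Q₁ = P₁. Then for the identity function f, the alternating chains (P₁, Q₁) and (P₀, Q₀) started at π satisfy v₁(f) ≤ v₀(f), but the series Σₖ≥₁ |Cov(f(X₀⁽¹⁾), f(Xₖ⁽¹⁾))| diverges. -/
import Mathlib


open MeasureTheory Filter
open scoped ENNReal Topology

/-- `opSeqF P Q i m f x = E[f(X_{i+m}) ∣ X_i = x]` for the inhomogeneous chain using the
(plain-function) kernel `P` out of even times and `Q` out of odd times. -/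
noncomputable def opSeqF {X : Type*} [MeasurableSpace X] (P Q : X → Measure X) :
    ℕ → ℕ → (X → ℝ) → X → ℝ
  | _, 0, f => f
  | i, m + 1, f => fun x => ∫ y, opSeqF P Q (i + 1) m f y ∂((if Even i then P else Q) x)

/-- `covF π P Q f i m = Cov(f(X_i), f(X_{i+m}))` for the alternating chain started in
stationarity `X₀ ∼ π`. -/
noncomputable def covF {X : Type*} [MeasurableSpace X] (π : Measure X) (P Q : X → Measure X)
    (f : X → ℝ) (i m : ℕ) : ℝ :=
  (∫ x, f x * opSeqF P Q i m f x ∂π) - (∫ x, f x ∂π) ^ 2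

/-- `varF π P Q f n = Var(∑_{k=0}^{n-1} f(X_k))` for the alternating chain started in
stationarity. -/
noncomputable def varF {X : Type*} [MeasurableSpace X] (π : Measure X) (P Q : X → Measure X)
    (f : X → ℝ) (n : ℕ) : ℝ :=
  ∑ i ∈ Finset.range n, ∑ j ∈ Finset.range n,
    covF π P Q f (min i j) (max i j - min i j)

/-- The uniform distribution on `{-1, 1} ⊆ ℤ`. -/
noncomputable def pi7 : Measure ℤ := (2 : ℝ≥0∞)⁻¹ • (Measure.dirac 1 + Measure.dirac (-1))

/-- The "resampling" kernel `P₀(x, ·) = π`. -/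
noncomputable def P0k : ℤ → Measure ℤ := fun _ => pi7

/-- The "flip" kernel `P₁(x, ·) = δ_{-x}`; also `Q₀ = Q₁ = P₁`. -/
noncomputable def P1k : ℤ → Measure ℤ := fun x => Measure.dirac (-x)

lemma integrable_dirac7 (g : ℤ → ℝ) (a : ℤ) : Integrable g (Measure.dirac a) := by
  constructor
  · exact (measurable_from_top (f := g)).aestronglyMeasurable
  · rw [HasFiniteIntegral, lintegral_dirac]
    exact ENNReal.coe_lt_top

lemma int_pi7 (g : ℤ → ℝ) : ∫ x, g x ∂pi7 = (g 1 + g (-1)) / 2 := by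
  rw [pi7, integral_smul_measure,
    integral_add_measure (integrable_dirac7 g 1) (integrable_dirac7 g (-1)),
    integral_dirac, integral_dirac]
  simp [ENNReal.toReal_inv]
  ring

lemma op1 (m i : ℕ) :
    opSeqF P1k P1k i m (fun x : ℤ => (x : ℝ)) = fun x : ℤ => (-1) ^ m * (x : ℝ) := by
  induction m generalizing i with
  | zero => funext x; simp [opSeqF]
  | succ m ih =>
    funext x
    simp only [opSeqF, ite_self, P1k, ih (i + 1), integral_dirac]
    push_cast
    ring

lemma cov1 (i m : ℕ) :
    covF pi7 P1k P1k (fun x : ℤ => (x : ℝ)) i m = (-1) ^ m := by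
  rw [covF, op1, int_pi7, int_pi7]
  push_cast
  ring

lemma op0 (m i : ℕ) :
    opSeqF P0k P1k i m (fun x : ℤ => (x : ℝ)) =
      if m = 0 then (fun x : ℤ => (x : ℝ))
      else if m = 1 ∧ ¬ Even i then (fun x : ℤ => -(x : ℝ)) else 0 := by
  induction m generalizing i with
  | zero => simp [opSeqF]
  | succ m ih =>
    funext x
    by_cases hi : Even i
    · have h1 : ¬ Even (i + 1) := by simp [Nat.even_add_one, hi]
      simp only [opSeqF, if_pos hi, P0k, ih (i + 1)]
      rcases Nat.eq_zero_or_pos m with hm | hm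
      · subst hm
        simp [int_pi7, hi]
      · rcases eq_or_ne m 1 with hm1 | hm1
        · subst hm1
          simp [h1, int_pi7, hi]
        · simp [hm.ne', hm1, hi, integral_zero]
    · have h1 : Even (i + 1) := Nat.even_add_one.mpr hi
      simp only [opSeqF, if_neg hi, P1k, ih (i + 1), integral_dirac]
      rcases Nat.eq_zero_or_pos m with hm | hm
      · subst hm
        simp [hi]
      · simp [hm.ne', h1, hi]

lemma cov0 (i m : ℕ) :
    covF pi7 P0k P1k (fun x : ℤ => (x : ℝ)) i m =
      if m = 0 then 1 else if m = 1 ∧ ¬ Even i then -1 else 0 := by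
  rw [covF, op0, int_pi7]
  rcases eq_or_ne m 0 with hm | hm
  · subst hm; simp [int_pi7]
  · rw [if_neg hm, if_neg hm]
    by_cases h : m = 1 ∧ ¬ Even i
    · rw [if_pos h, if_pos h, int_pi7]; norm_num
    · rw [if_neg h, if_neg h, int_pi7]; norm_num

lemma varF_succ {X : Type*} [MeasurableSpace X] (π : Measure X) (P Q : X → Measure X)
    (f : X → ℝ) (n : ℕ) :
    varF π P Q f (n + 1) = varF π P Q f n
      + 2 * (∑ i ∈ Finset.range n, covF π P Q f i (n - i)) + covF π P Q f n 0 := by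
  simp only [varF, Finset.sum_range_succ]
  rw [Finset.sum_add_distrib]
  have h : ∀ i ∈ Finset.range n,
      covF π P Q f (min i n) (max i n - min i n) = covF π P Q f i (n - i) := by
    intro i hi
    have : i ≤ n := (Finset.mem_range.mp hi).le
    rw [min_eq_left this, max_eq_right this]
  have h' : ∀ j ∈ Finset.range n,
      covF π P Q f (min n j) (max n j - min n j) = covF π P Q f j (n - j) := by
    intro j hj
    have : j ≤ n := (Finset.mem_range.mp hj).le
    rw [min_eq_right this, max_eq_left this]
  rw [Finset.sum_congr rfl h, Finset.sum_congr rfl h', min_self, max_self, Nat.sub_self]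
  ring

lemma varF0_eq (n : ℕ) :
    varF pi7 P0k P1k (fun x : ℤ => (x : ℝ)) n =
      if n = 0 then 0 else if Even n then 2 else 1 := by
  induction n with
  | zero => simp [varF]
  | succ n ih =>
    rw [varF_succ, ih, cov0]
    have hsum : (∑ i ∈ Finset.range n, covF pi7 P0k P1k (fun x : ℤ => (x : ℝ)) i (n - i))
        = if Even (n - 1) then 0 else -1 := by
      have key : ∀ i ∈ Finset.range n, covF pi7 P0k P1k (fun x : ℤ => (x : ℝ)) i (n - i)
          = if i = n - 1 then (if Even (n - 1) then 0 else -1) else 0 := by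
        intro i hi
        have hio : i < n := Finset.mem_range.mp hi
        rw [cov0, if_neg (Nat.sub_ne_zero_of_lt hio)]
        by_cases hie : i = n - 1
        · subst hie
          have : n - (n - 1) = 1 := by omega
          rw [this]
          by_cases he : Even (n - 1) <;> simp [he]
        · rw [if_neg hie, if_neg]
          rintro ⟨h1, -⟩
          exact hie (by omega)
      rw [Finset.sum_congr rfl key, Finset.sum_ite_eq' (Finset.range n) (n - 1)]
      rcases Nat.eq_zero_or_pos n with hn | hn
      · subst hn; simp
      · rw [if_pos (Finset.mem_range.mpr (by omega))]
    rw [hsum]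
    rcases Nat.even_or_odd n with he | ho
    · rcases Nat.eq_zero_or_pos n with hn | hn
      · subst hn; norm_num
      · have h1 : ¬ Even (n - 1) := by
          rw [Nat.even_sub hn]; simpa using he
        have h2 : ¬ Even (n + 1) := by simp [Nat.even_add_one, he]
        simp [hn.ne', he, h1, h2]
    · have he := Nat.not_even_iff_odd.mpr ho
      have h1 : Even (n - 1) := by
        rcases Nat.even_or_odd (n - 1) with h | h
        · exact h
        · exfalso; have := ho.pos; rw [Nat.odd_sub this] at h; tauto
      have h2 : Even (n + 1) := by simpa [Nat.even_add_one] using he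
      have hn : n ≠ 0 := ho.pos.ne'
      simp [hn, he, h1, h2]
      norm_num

lemma sum1 (n : ℕ) : (∑ i ∈ Finset.range n, ((-1 : ℝ)) ^ (n - i))
    = if Even n then 0 else -1 := by
  induction n with
  | zero => simp
  | succ n ih =>
    rw [Finset.sum_range_succ]
    have key : ∀ i ∈ Finset.range n, ((-1 : ℝ)) ^ (n + 1 - i) = -((-1 : ℝ)) ^ (n - i) := by
      intro i hi
      have hio := Finset.mem_range.mp hi
      have : n + 1 - i = (n - i) + 1 := by omega
      rw [this, pow_succ]
      ring
    rw [Finset.sum_congr rfl key, Finset.sum_neg_distrib, ih]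
    rcases Nat.even_or_odd n with he | ho
    · have : ¬ Even (n + 1) := by simp [Nat.even_add_one, he]
      simp [he, this]
    · have he := Nat.not_even_iff_odd.mpr ho
      have : Even (n + 1) := by simpa [Nat.even_add_one] using he
      simp [he, this]

lemma varF1_eq (n : ℕ) :
    varF pi7 P1k P1k (fun x : ℤ => (x : ℝ)) n = if Even n then 0 else 1 := by
  induction n with
  | zero => simp [varF]
  | succ n ih =>
    rw [varF_succ, ih, cov1]
    simp only [cov1]
    rw [sum1]
    rcases Nat.even_or_odd n with he | ho
    · have : ¬ Even (n + 1) := by simp [Nat.even_add_one, he]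
      simp [he, this]
    · have he := Nat.not_even_iff_odd.mpr ho
      have : Even (n + 1) := by simpa [Nat.even_add_one] using he
      simp [he, this]
      norm_num

/-- Counterexample (Remark 3): for `X = {-1,1}`, `π` uniform, `P₀(x,·) = π`,
`P₁(x,·) = δ_{-x}`, `Q₀ = Q₁ = P₁` and `f = id`, the asymptotic variances of the two
alternating chains exist and satisfy `v₁(f) ≤ v₀(f)`, yet the autocovariance series of
chain 1 is not absolutely summable: condition (5) is not necessary for (6). -/
theorem stmt7 :
    (∃ v0 v1 : ℝ,
      Tendsto (fun n : ℕ => varF pi7 P0k P1k (fun x : ℤ => (x : ℝ)) n / n) atTop (𝓝 v0) ∧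
      Tendsto (fun n : ℕ => varF pi7 P1k P1k (fun x : ℤ => (x : ℝ)) n / n) atTop (𝓝 v1) ∧
      v1 ≤ v0) ∧
    ¬ Summable (fun k : ℕ => |covF pi7 P1k P1k (fun x : ℤ => (x : ℝ)) 0 (k + 1)|) := by


  constructor
  · refine ⟨0, 0, ?_, ?_, le_refl 0⟩
    · refine squeeze_zero_norm ?_ (tendsto_const_div_atTop_nhds_zero_nat 2)
      intro n
      rcases Nat.eq_zero_or_pos n with h | h
      · subst h; simp [varF]
      · have habs : |varF pi7 P0k P1k (fun x : ℤ => (x : ℝ)) n| ≤ 2 := by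
          rw [varF0_eq]; split_ifs <;> norm_num
        rw [Real.norm_eq_abs, abs_div, Nat.abs_cast]
        have hn : (0 : ℝ) < n := by exact_mod_cast h
        exact div_le_div_of_nonneg_right habs hn.le |>.trans_eq rfl
    · refine squeeze_zero_norm ?_ (tendsto_const_div_atTop_nhds_zero_nat 2)
      intro n
      rcases Nat.eq_zero_or_pos n with h | h
      · subst h; simp [varF]
      · have habs : |varF pi7 P1k P1k (fun x : ℤ => (x : ℝ)) n| ≤ 2 := by
          rw [varF1_eq]; split_ifs <;> norm_num
        rw [Real.norm_eq_abs, abs_div, Nat.abs_cast]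
        have hn : (0 : ℝ) < n := by exact_mod_cast h
        exact div_le_div_of_nonneg_right habs hn.le |>.trans_eq rfl
  · intro hs
    have heq : (fun k : ℕ => |covF pi7 P1k P1k (fun x : ℤ => (x : ℝ)) 0 (k + 1)|)
        = fun _ => (1 : ℝ) := by
      funext k; rw [cov1]; simp
    rw [heq] at hs
    have := tendsto_nhds_unique tendsto_const_nhds hs.tendsto_atTop_zero
    norm_num at this
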